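/- For every n ≥ 0: E[(f_n(1, σ³(n)) − θ/2)(f_n(2, σ³(n)) − θ/2)] = (θ/2)·y_{n;θ} − (θ/(1−θ))·(v_{n;θ} − (θ/2)·x_{n;θ}). -/

import Mathlib

open Finset Filter

namespace Broadcast

/-- The root distribution `π = (θ/2, θ/2, (1-θ)/2, (1-θ)/2)`. -/
noncomputable def rootDist (θ : ℝ) (i : Fin 4) : ℝ :=
  if (i : ℕ) < 2 then θ / 2 else (1 - θ) / 2

/-- The transition matrix `P i j = λ · 1{i=j} + (1-λ) π_j`. -/
noncomputable def trans (θ lam : ℝ) (i j : Fin 4) : ℝ :=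
  (if i = j then lam else 0) + (1 - lam) * rootDist θ j

/-- Vertices at level `n` of the infinite rooted `d`-ary tree, encoded as paths. -/
abbrev Vtx (d n : ℕ) := Fin n → Fin d

/-- Configurations (assignments of states) on level `n`. -/
abbrev Config (d n : ℕ) := Vtx d n → Fin 4

/-- Restriction of a level-`(n+1)` configuration to the subtree of the `j`-th child
of the root. -/
def restrict {d n : ℕ} (j : Fin d) (A : Config d (n + 1)) : Config d n :=
  fun p => A (Fin.cons j p)

/-- `lik θ λ d n i A` is the probability of observing the configuration `A` on level `n`,
given that the root is in state `i` (the broadcasting process). -/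
noncomputable def lik (θ lam : ℝ) (d : ℕ) : (n : ℕ) → Fin 4 → Config d n → ℝ
  | 0, i, A => if A Fin.elim0 = i then 1 else 0
  | n + 1, i, A =>
      ∏ j : Fin d, ∑ k : Fin 4, trans θ lam i k * lik θ lam d n k (restrict j A)

/-- Unconditional probability of observing the configuration `A` on level `n`. -/
noncomputable def marg (θ lam : ℝ) (d n : ℕ) (A : Config d n) : ℝ :=
  ∑ i : Fin 4, rootDist θ i * lik θ lam d n i A

/-- The posterior `f_n(i, A) = P(σ_ρ = i ∣ σ(n) = A)`. -/
noncomputable def post (θ lam : ℝ) (d n : ℕ) (i : Fin 4) (A : Config d n) : ℝ :=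
  rootDist θ i * lik θ lam d n i A / marg θ lam d n A

/-- Expectation of `g(σ(n))` conditioned on the root being in state `r`,
i.e. `E g(σ^r(n))`. -/
noncomputable def condE (θ lam : ℝ) (d n : ℕ) (r : Fin 4) (g : Config d n → ℝ) : ℝ :=
  ∑ A : Config d n, lik θ lam d n r A * g A

/-- Unconditional expectation of `g(σ(n))`. -/
noncomputable def uncondE (θ lam : ℝ) (d n : ℕ) (g : Config d n → ℝ) : ℝ :=
  ∑ A : Config d n, marg θ lam d n A * g A

/-- `x_{n;θ} = E f_n(1, σ¹(n)) - θ/2`. -/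
noncomputable def xT (θ lam : ℝ) (d n : ℕ) : ℝ :=
  condE θ lam d n 0 (fun A => post θ lam d n 0 A) - θ / 2

/-- `y_{n;θ} = E f_n(2, σ¹(n)) - θ/2`. -/
noncomputable def yT (θ lam : ℝ) (d n : ℕ) : ℝ :=
  condE θ lam d n 0 (fun A => post θ lam d n 1 A) - θ / 2

/-- `z_{n;θ} = E f_n(1, σ³(n)) - θ/2`. -/
noncomputable def zT (θ lam : ℝ) (d n : ℕ) : ℝ :=
  condE θ lam d n 2 (fun A => post θ lam d n 0 A) - θ / 2

/-- `x_{n;1-θ} = E f_n(3, σ³(n)) - (1-θ)/2`. -/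
noncomputable def xH (θ lam : ℝ) (d n : ℕ) : ℝ :=
  condE θ lam d n 2 (fun A => post θ lam d n 2 A) - (1 - θ) / 2

/-- `y_{n;1-θ} = E f_n(4, σ³(n)) - (1-θ)/2`. -/
noncomputable def yH (θ lam : ℝ) (d n : ℕ) : ℝ :=
  condE θ lam d n 2 (fun A => post θ lam d n 3 A) - (1 - θ) / 2

/-- `z_{n;1-θ} = E f_n(3, σ¹(n)) - (1-θ)/2`. -/
noncomputable def zH (θ lam : ℝ) (d n : ℕ) : ℝ :=
  condE θ lam d n 0 (fun A => post θ lam d n 2 A) - (1 - θ) / 2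

/-- `u_{n;θ} = E (f_n(1, σ¹(n)) - θ/2)²`. -/
noncomputable def uT (θ lam : ℝ) (d n : ℕ) : ℝ :=
  condE θ lam d n 0 (fun A => (post θ lam d n 0 A - θ / 2) ^ 2)

/-- `v_{n;θ} = E (f_n(2, σ¹(n)) - θ/2)²`. -/
noncomputable def vT (θ lam : ℝ) (d n : ℕ) : ℝ :=
  condE θ lam d n 0 (fun A => (post θ lam d n 1 A - θ / 2) ^ 2)

/-- `w_{n;θ} = E (f_n(1, σ³(n)) - θ/2)²`. -/
noncomputable def wT (θ lam : ℝ) (d n : ℕ) : ℝ :=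
  condE θ lam d n 2 (fun A => (post θ lam d n 0 A - θ / 2) ^ 2)

/-- `w_{n;1-θ} = E (f_n(3, σ¹(n)) - (1-θ)/2)²`. -/
noncomputable def wH (θ lam : ℝ) (d n : ℕ) : ℝ :=
  condE θ lam d n 0 (fun A => (post θ lam d n 2 A - (1 - θ) / 2) ^ 2)

/-- `Y_{ij}(n) = f_n(i, σ_j(n+1))`, viewed as a function of the level-`(n+1)`
configuration. -/
noncomputable def Yf (θ lam : ℝ) (d n : ℕ) (i : Fin 4) (j : Fin d)
    (A : Config d (n + 1)) : ℝ :=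
  post θ lam d n i (restrict j A)

/-- `Z_i(n)`, viewed as a function of the level-`(n+1)` configuration. -/
noncomputable def Zf (θ lam : ℝ) (d n : ℕ) (i : Fin 4) (A : Config d (n + 1)) : ℝ :=
  if (i : ℕ) < 2 then
    ∏ j : Fin d, (1 + (2 * lam / θ) * (Yf θ lam d n i j A - θ / 2))
  else
    ∏ j : Fin d, (1 + (2 * lam / (1 - θ)) * (Yf θ lam d n i j A - (1 - θ) / 2))

/-- `S = (θ/2)Z₁ + (θ/2)Z₂ + ((1-θ)/2)Z₃ + ((1-θ)/2)Z₄`. -/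
noncomputable def Sf (θ lam : ℝ) (d n : ℕ) (A : Config d (n + 1)) : ℝ :=
  θ / 2 * Zf θ lam d n 0 A + θ / 2 * Zf θ lam d n 1 A
    + (1 - θ) / 2 * Zf θ lam d n 2 A + (1 - θ) / 2 * Zf θ lam d n 3 A

/-- Total variation distance between the laws of `σ^i(n)` and `σ^j(n)`. -/
noncomputable def dTV (θ lam : ℝ) (d n : ℕ) (i j : Fin 4) : ℝ :=
  (∑ A : Config d n, |lik θ lam d n i A - lik θ lam d n j A|) / 2

/-- The model is reconstructible if for some pair of root states the total variation
distance between the conditioned level-`n` configurations does not vanish. -/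
def Reconstructible (θ lam : ℝ) (d : ℕ) : Prop :=
  ∃ i j : Fin 4, 0 < Filter.limsup (fun n => dTV θ lam d n i j) Filter.atTop

/-- Probability that the root is in state `i` and the states at the vertices
`v 1, …, v k ∈ L(M)` are `c 1, …, c k`. -/
noncomputable def jointRootEvent (θ lam : ℝ) (d M k : ℕ) (v : Fin k → Vtx d M)
    (c : Fin k → Fin 4) (i : Fin 4) : ℝ :=
  ∑ A : Config d M,
    if ∀ t, A (v t) = c t then rootDist θ i * lik θ lam d M i A else 0

/-- Conditional probability `P(σ_ρ = i ∣ σ_{v t} = c t, 1 ≤ t ≤ k)`. -/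
noncomputable def condRoot (θ lam : ℝ) (d M k : ℕ) (v : Fin k → Vtx d M)
    (c : Fin k → Fin 4) (i : Fin 4) : ℝ :=
  jointRootEvent θ lam d M k v c i / ∑ i' : Fin 4, jointRootEvent θ lam d M k v c i'


section Helpers

lemma rootDist_sum (θ : ℝ) : ∑ j : Fin 4, rootDist θ j = 1 := by
  have h0 : ((0 : Fin 4) : ℕ) = 0 := rfl
  have h1 : ((1 : Fin 4) : ℕ) = 1 := rfl
  have h2 : ((2 : Fin 4) : ℕ) = 2 := rfl
  have h3 : ((3 : Fin 4) : ℕ) = 3 := rfl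
  simp [Fin.sum_univ_four, rootDist, h0, h1, h2, h3]
  ring

lemma trans_sum (θ lam : ℝ) (i : Fin 4) : ∑ j : Fin 4, trans θ lam i j = 1 := by
  simp only [trans, Finset.sum_add_distrib, ← Finset.mul_sum, rootDist_sum,
    Finset.sum_ite_eq, Finset.mem_univ, if_true]
  ring

lemma lik_nonneg (θ lam : ℝ) (d : ℕ) (hP : ∀ i j : Fin 4, 0 ≤ trans θ lam i j) :
    ∀ (n : ℕ) (i : Fin 4) (A : Config d n), 0 ≤ lik θ lam d n i A := by
  intro n
  induction n with
  | zero => intro i A; unfold lik; split <;> norm_num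
  | succ n ih =>
      intro i A
      unfold lik
      exact Finset.prod_nonneg fun j _ => Finset.sum_nonneg fun k _ =>
        mul_nonneg (hP i k) (ih k _)

/-- Level-`(n+1)` configurations are tuples of level-`n` configurations. -/
def configEquiv (d n : ℕ) : Config d (n + 1) ≃ (Fin d → Config d n) where
  toFun A := fun j p => A (Fin.cons j p)
  invFun B := fun p => B (p 0) (Fin.tail p)
  left_inv A := by
    funext p
    simp [Fin.cons_self_tail]
  right_inv B := by
    funext j p
    simp

lemma sum_lik (θ lam : ℝ) (d : ℕ) :
    ∀ (n : ℕ) (i : Fin 4), ∑ A : Config d n, lik θ lam d n i A = 1 := by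
  intro n
  induction n with
  | zero =>
      intro i
      have h : ∀ A : Config d 0, lik θ lam d 0 i A = if A default = i then 1 else 0 := by
        intro A
        have hA : A Fin.elim0 = A default := congrArg A (Subsingleton.elim _ _)
        unfold lik
        rw [hA]
      calc ∑ A : Config d 0, lik θ lam d 0 i A
          = ∑ x : Fin 4, if x = i then (1:ℝ) else 0 :=
            Fintype.sum_equiv (Equiv.funUnique (Vtx d 0) (Fin 4))
              (fun A => lik θ lam d 0 i A) (fun x => if x = i then (1:ℝ) else 0)
              (fun A => by exact h A)
        _ = 1 := by simp
  | succ n ih =>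
      intro i
      have h1 : ∑ A : Config d (n+1), lik θ lam d (n+1) i A
          = ∑ B : Fin d → Config d n,
              ∏ j : Fin d, ∑ k : Fin 4, trans θ lam i k * lik θ lam d n k (B j) :=
        Fintype.sum_equiv (configEquiv d n)
          (fun A => lik θ lam d (n+1) i A)
          (fun B => ∏ j : Fin d, ∑ k : Fin 4, trans θ lam i k * lik θ lam d n k (B j))
          (fun A => rfl)
      rw [h1, ← Fintype.prod_sum (fun (j : Fin d) (B : Config d n) =>
        ∑ k : Fin 4, trans θ lam i k * lik θ lam d n k B)]
      have h2 : ∑ B : Config d n, ∑ k : Fin 4, trans θ lam i k * lik θ lam d n k B = 1 := by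
        rw [Finset.sum_comm]
        calc ∑ k : Fin 4, ∑ B : Config d n, trans θ lam i k * lik θ lam d n k B
            = ∑ k : Fin 4, trans θ lam i k * ∑ B : Config d n, lik θ lam d n k B := by
              refine Finset.sum_congr rfl fun k _ => (Finset.mul_sum _ _ _).symm
          _ = 1 := by simp [ih, trans_sum]
      simp [h2]

lemma lik_perm (θ lam : ℝ) (d : ℕ) (e : Equiv.Perm (Fin 4))
    (hπ : ∀ i, rootDist θ (e i) = rootDist θ i) :
    ∀ (n : ℕ) (i : Fin 4) (A : Config d n),
      lik θ lam d n (e i) (fun v => e (A v)) = lik θ lam d n i A := by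
  intro n
  induction n with
  | zero =>
      intro i A
      unfold lik
      simp [Equiv.apply_eq_iff_eq]
  | succ n ih =>
      intro i A
      unfold lik
      refine Finset.prod_congr rfl fun j _ => ?_
      refine (Fintype.sum_equiv e _ _ fun k => ?_).symm
      have hr : restrict j (fun v => e (A v)) = fun v => e (restrict j A v) := rfl
      rw [hr, ih k (restrict j A)]
      congr 1
      unfold trans
      rw [hπ k]
      congr 1
      simp [Equiv.apply_eq_iff_eq]

lemma marg_perm (θ lam : ℝ) (d n : ℕ) (e : Equiv.Perm (Fin 4))
    (hπ : ∀ i, rootDist θ (e i) = rootDist θ i) (A : Config d n) :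
    marg θ lam d n (fun v => e (A v)) = marg θ lam d n A := by
  unfold marg
  refine (Fintype.sum_equiv e _ _ fun i => ?_).symm
  rw [hπ i, lik_perm θ lam d e hπ n i A]

lemma post_perm (θ lam : ℝ) (d n : ℕ) (e : Equiv.Perm (Fin 4))
    (hπ : ∀ i, rootDist θ (e i) = rootDist θ i) (i : Fin 4) (A : Config d n) :
    post θ lam d n (e i) (fun v => e (A v)) = post θ lam d n i A := by
  unfold post
  rw [hπ i, lik_perm θ lam d e hπ n i A, marg_perm θ lam d n e hπ A]

lemma sum_config_perm (θ lam : ℝ) (d n : ℕ) (e : Equiv.Perm (Fin 4))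
    (G : Config d n → ℝ) :
    ∑ A : Config d n, G A = ∑ A : Config d n, G (fun v => e (A v)) :=
  ((Equiv.piCongrRight fun _ : Vtx d n => e).sum_comp G).symm

end Helpers

/-- `E(f_n(1,σ³(n))-θ/2)(f_n(2,σ³(n))-θ/2)
= (θ/2)y_{n;θ} - (θ/(1-θ))(v_{n;θ} - (θ/2)x_{n;θ})`. -/
theorem cross_moment_12_root3 (θ lam : ℝ) (hθ : θ ∈ Set.Ioo (0 : ℝ) 1) (hlam : |lam| ≤ 1)
    (hP : ∀ i j : Fin 4, 0 ≤ trans θ lam i j) (d : ℕ) (hd : 2 ≤ d) (n : ℕ) :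
    condE θ lam d n 2
        (fun A => (post θ lam d n 0 A - θ / 2) * (post θ lam d n 1 A - θ / 2))
      = θ / 2 * yT θ lam d n - θ / (1 - θ) * (vT θ lam d n - θ / 2 * xT θ lam d n) := by
  obtain ⟨hθ0, hθ1⟩ := hθ
  have h1θ : (1:ℝ) - θ ≠ 0 := sub_ne_zero_of_ne hθ1.ne'
  have hθne : θ ≠ 0 := ne_of_gt hθ0
  have hr0 : rootDist θ 0 = θ/2 := rfl
  have hr1 : rootDist θ 1 = θ/2 := rfl
  have hr2 : rootDist θ 2 = (1-θ)/2 := rfl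
  have hr3 : rootDist θ 3 = (1-θ)/2 := rfl
  have hrpos : ∀ i : Fin 4, 0 < rootDist θ i := by
    intro i
    unfold rootDist
    split <;> linarith
  have hlikpos : ∀ (i : Fin 4) (A : Config d n), 0 ≤ lik θ lam d n i A :=
    fun i A => lik_nonneg θ lam d hP n i A
  have hsumlik : ∀ i : Fin 4, ∑ A : Config d n, lik θ lam d n i A = 1 :=
    sum_lik θ lam d n
  -- marg * post = rootDist * lik
  have hMP : ∀ (i : Fin 4) (A : Config d n),
      marg θ lam d n A * post θ lam d n i A = rootDist θ i * lik θ lam d n i A := by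
    intro i A
    by_cases hM : marg θ lam d n A = 0
    · have hM' : ∑ j : Fin 4, rootDist θ j * lik θ lam d n j A = 0 := hM
      have hz := (Finset.sum_eq_zero_iff_of_nonneg (fun j _ =>
        mul_nonneg (hrpos j).le (hlikpos j A))).mp hM'
      rw [hM, zero_mul, hz i (Finset.mem_univ i)]
    · unfold post
      rw [mul_comm, div_mul_cancel₀ _ hM]
  have hMP0 : ∀ A : Config d n,
      marg θ lam d n A * post θ lam d n 0 A = θ/2 * lik θ lam d n 0 A := by
    intro A; rw [hMP 0 A, hr0]
  have hMP1 : ∀ A : Config d n,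
      marg θ lam d n A * post θ lam d n 1 A = θ/2 * lik θ lam d n 1 A := by
    intro A; rw [hMP 1 A, hr1]
  have hm : ∀ A : Config d n, marg θ lam d n A
      = θ/2 * lik θ lam d n 0 A + θ/2 * lik θ lam d n 1 A
        + (1-θ)/2 * lik θ lam d n 2 A + (1-θ)/2 * lik θ lam d n 3 A := by
    intro A
    show (∑ i : Fin 4, rootDist θ i * lik θ lam d n i A) = _
    rw [Fin.sum_univ_four, hr0, hr1, hr2, hr3]
  -- permutation facts
  have hπ01 : ∀ i, rootDist θ ((Equiv.swap (0 : Fin 4) 1) i) = rootDist θ i := by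
    intro i; fin_cases i <;> rfl
  have hπ23 : ∀ i, rootDist θ ((Equiv.swap (2 : Fin 4) 3) i) = rootDist θ i := by
    intro i; fin_cases i <;> rfl
  -- symmetry of sums
  have symb : ∑ A : Config d n, marg θ lam d n A * (post θ lam d n 0 A - θ/2)^2
      = ∑ A : Config d n, marg θ lam d n A * (post θ lam d n 1 A - θ/2)^2 := by
    rw [sum_config_perm θ lam d n (Equiv.swap 0 1)
      (fun A => marg θ lam d n A * (post θ lam d n 0 A - θ/2)^2)]
    refine Finset.sum_congr rfl fun A _ => ?_
    have p0 : post θ lam d n 0 (fun v => (Equiv.swap (0:Fin 4) 1) (A v))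
        = post θ lam d n 1 A := by
      have h := post_perm θ lam d n (Equiv.swap 0 1) hπ01 1 A
      rwa [Equiv.swap_apply_right] at h
    rw [marg_perm θ lam d n _ hπ01 A, p0]
  have symc : ∑ A : Config d n,
        marg θ lam d n A * ((post θ lam d n 0 A - θ/2)^2 * (post θ lam d n 1 A - θ/2))
      = ∑ A : Config d n,
        marg θ lam d n A * ((post θ lam d n 0 A - θ/2) * (post θ lam d n 1 A - θ/2)^2) := by
    rw [sum_config_perm θ lam d n (Equiv.swap 0 1)
      (fun A => marg θ lam d n A * ((post θ lam d n 0 A - θ/2)^2 * (post θ lam d n 1 A - θ/2)))]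
    refine Finset.sum_congr rfl fun A _ => ?_
    have p0 : post θ lam d n 0 (fun v => (Equiv.swap (0:Fin 4) 1) (A v))
        = post θ lam d n 1 A := by
      have h := post_perm θ lam d n (Equiv.swap 0 1) hπ01 1 A
      rwa [Equiv.swap_apply_right] at h
    have p1 : post θ lam d n 1 (fun v => (Equiv.swap (0:Fin 4) 1) (A v))
        = post θ lam d n 0 A := by
      have h := post_perm θ lam d n (Equiv.swap 0 1) hπ01 0 A
      rwa [Equiv.swap_apply_left] at h
    rw [marg_perm θ lam d n _ hπ01 A, p0, p1]
    ring
  have sym23 : ∑ A : Config d n,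
        lik θ lam d n 2 A * ((post θ lam d n 0 A - θ/2) * (post θ lam d n 1 A - θ/2))
      = ∑ A : Config d n,
        lik θ lam d n 3 A * ((post θ lam d n 0 A - θ/2) * (post θ lam d n 1 A - θ/2)) := by
    rw [sum_config_perm θ lam d n (Equiv.swap 2 3)
      (fun A => lik θ lam d n 2 A * ((post θ lam d n 0 A - θ/2) * (post θ lam d n 1 A - θ/2)))]
    refine Finset.sum_congr rfl fun A _ => ?_
    have l2 : lik θ lam d n 2 (fun v => (Equiv.swap (2:Fin 4) 3) (A v))
        = lik θ lam d n 3 A := by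
      have h := lik_perm θ lam d (Equiv.swap 2 3) hπ23 n 3 A
      rwa [Equiv.swap_apply_right] at h
    have p0 : post θ lam d n 0 (fun v => (Equiv.swap (2:Fin 4) 3) (A v))
        = post θ lam d n 0 A := by
      have h := post_perm θ lam d n (Equiv.swap 2 3) hπ23 0 A
      rwa [show (Equiv.swap (2:Fin 4) 3) 0 = 0 from rfl] at h
    have p1 : post θ lam d n 1 (fun v => (Equiv.swap (2:Fin 4) 3) (A v))
        = post θ lam d n 1 A := by
      have h := post_perm θ lam d n (Equiv.swap 2 3) hπ23 1 A
      rwa [show (Equiv.swap (2:Fin 4) 3) 1 = 1 from rfl] at h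
    rw [l2, p0, p1]
  -- basic moment sums
  have k1 : ∑ A : Config d n, marg θ lam d n A = 1 := by
    have : ∑ A : Config d n, marg θ lam d n A
        = ∑ A : Config d n, ∑ i : Fin 4, rootDist θ i * lik θ lam d n i A :=
      Finset.sum_congr rfl fun A _ => rfl
    rw [this, Finset.sum_comm]
    calc ∑ i : Fin 4, ∑ A : Config d n, rootDist θ i * lik θ lam d n i A
        = ∑ i : Fin 4, rootDist θ i * ∑ A : Config d n, lik θ lam d n i A :=
          Finset.sum_congr rfl fun i _ => (Finset.mul_sum _ _ _).symm
      _ = 1 := by simp only [hsumlik, mul_one]; exact rootDist_sum θ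
  have k2 : ∑ A : Config d n, marg θ lam d n A * post θ lam d n 0 A = θ/2 := by
    calc ∑ A : Config d n, marg θ lam d n A * post θ lam d n 0 A
        = ∑ A : Config d n, θ/2 * lik θ lam d n 0 A :=
          Finset.sum_congr rfl fun A _ => hMP0 A
      _ = θ/2 := by rw [← Finset.mul_sum, hsumlik 0, mul_one]
  have k3 : ∑ A : Config d n, marg θ lam d n A * post θ lam d n 1 A = θ/2 := by
    calc ∑ A : Config d n, marg θ lam d n A * post θ lam d n 1 A
        = ∑ A : Config d n, θ/2 * lik θ lam d n 1 A :=
          Finset.sum_congr rfl fun A _ => hMP1 A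
      _ = θ/2 := by rw [← Finset.mul_sum, hsumlik 1, mul_one]
  -- expansions
  have k7 : θ/2 * (∑ A : Config d n, lik θ lam d n 0 A * post θ lam d n 1 A)
      = (∑ A : Config d n, marg θ lam d n A * ((post θ lam d n 0 A - θ/2) * (post θ lam d n 1 A - θ/2)))
        + θ/2 * (∑ A : Config d n, marg θ lam d n A * post θ lam d n 1 A)
        + θ/2 * (∑ A : Config d n, marg θ lam d n A * post θ lam d n 0 A)
        - (θ/2)^2 * (∑ A : Config d n, marg θ lam d n A) := by
    rw [Finset.mul_sum]
    rw [show ∑ A : Config d n, θ/2 * (lik θ lam d n 0 A * post θ lam d n 1 A)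
        = ∑ A : Config d n,
            (marg θ lam d n A * ((post θ lam d n 0 A - θ/2) * (post θ lam d n 1 A - θ/2))
              + θ/2 * (marg θ lam d n A * post θ lam d n 1 A)
              + θ/2 * (marg θ lam d n A * post θ lam d n 0 A)
              - (θ/2)^2 * marg θ lam d n A) from
      Finset.sum_congr rfl fun A _ => by
        linear_combination (-(post θ lam d n 1 A)) * (hMP0 A)]
    simp only [Finset.sum_add_distrib, Finset.sum_sub_distrib, ← Finset.mul_sum]
  have k8 : θ/2 * (∑ A : Config d n, lik θ lam d n 0 A * post θ lam d n 0 A)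
      = (∑ A : Config d n, marg θ lam d n A * (post θ lam d n 0 A - θ/2)^2)
        + 2 * (θ/2) * (∑ A : Config d n, marg θ lam d n A * post θ lam d n 0 A)
        - (θ/2)^2 * (∑ A : Config d n, marg θ lam d n A) := by
    rw [Finset.mul_sum]
    rw [show ∑ A : Config d n, θ/2 * (lik θ lam d n 0 A * post θ lam d n 0 A)
        = ∑ A : Config d n,
            (marg θ lam d n A * (post θ lam d n 0 A - θ/2)^2
              + 2 * (θ/2) * (marg θ lam d n A * post θ lam d n 0 A)
              - (θ/2)^2 * marg θ lam d n A) from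
      Finset.sum_congr rfl fun A _ => by
        linear_combination (-(post θ lam d n 0 A)) * (hMP0 A)]
    simp only [Finset.sum_add_distrib, Finset.sum_sub_distrib, ← Finset.mul_sum]
  have k9 : θ/2 * (∑ A : Config d n, lik θ lam d n 0 A * (post θ lam d n 1 A - θ/2)^2)
      = (∑ A : Config d n, marg θ lam d n A * ((post θ lam d n 0 A - θ/2) * (post θ lam d n 1 A - θ/2)^2))
        + θ/2 * (∑ A : Config d n, marg θ lam d n A * (post θ lam d n 1 A - θ/2)^2) := by
    rw [Finset.mul_sum]
    rw [show ∑ A : Config d n, θ/2 * (lik θ lam d n 0 A * (post θ lam d n 1 A - θ/2)^2)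
        = ∑ A : Config d n,
            (marg θ lam d n A * ((post θ lam d n 0 A - θ/2) * (post θ lam d n 1 A - θ/2)^2)
              + θ/2 * (marg θ lam d n A * (post θ lam d n 1 A - θ/2)^2)) from
      Finset.sum_congr rfl fun A _ => by
        linear_combination (-((post θ lam d n 1 A - θ/2)^2)) * (hMP0 A)]
    simp only [Finset.sum_add_distrib, ← Finset.mul_sum]
  -- main split for root state 2
  have k6 : (1-θ) * (∑ A : Config d n,
        lik θ lam d n 2 A * ((post θ lam d n 0 A - θ/2) * (post θ lam d n 1 A - θ/2)))
      = (1-θ) * (∑ A : Config d n,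
            marg θ lam d n A * ((post θ lam d n 0 A - θ/2) * (post θ lam d n 1 A - θ/2)))
        - (∑ A : Config d n,
            marg θ lam d n A * ((post θ lam d n 0 A - θ/2)^2 * (post θ lam d n 1 A - θ/2)))
        - (∑ A : Config d n,
            marg θ lam d n A * ((post θ lam d n 0 A - θ/2) * (post θ lam d n 1 A - θ/2)^2)) := by
    have step1 : (1-θ) * (∑ A : Config d n,
          lik θ lam d n 2 A * ((post θ lam d n 0 A - θ/2) * (post θ lam d n 1 A - θ/2)))
        = ∑ A : Config d n,
            ((1-θ)/2 * (lik θ lam d n 2 A * ((post θ lam d n 0 A - θ/2) * (post θ lam d n 1 A - θ/2)))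
              + (1-θ)/2 * (lik θ lam d n 3 A * ((post θ lam d n 0 A - θ/2) * (post θ lam d n 1 A - θ/2)))) := by
      rw [Finset.sum_add_distrib, ← Finset.mul_sum, ← Finset.mul_sum, ← sym23]
      ring
    rw [step1]
    rw [show ∑ A : Config d n,
          ((1-θ)/2 * (lik θ lam d n 2 A * ((post θ lam d n 0 A - θ/2) * (post θ lam d n 1 A - θ/2)))
            + (1-θ)/2 * (lik θ lam d n 3 A * ((post θ lam d n 0 A - θ/2) * (post θ lam d n 1 A - θ/2))))
        = ∑ A : Config d n,
          ((1-θ) * (marg θ lam d n A * ((post θ lam d n 0 A - θ/2) * (post θ lam d n 1 A - θ/2)))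
            - marg θ lam d n A * ((post θ lam d n 0 A - θ/2)^2 * (post θ lam d n 1 A - θ/2))
            - marg θ lam d n A * ((post θ lam d n 0 A - θ/2) * (post θ lam d n 1 A - θ/2)^2)) from
      Finset.sum_congr rfl fun A _ => by
        linear_combination
          (-((post θ lam d n 0 A - θ/2) * (post θ lam d n 1 A - θ/2))) * (hm A)
          + ((post θ lam d n 0 A - θ/2) * (post θ lam d n 1 A - θ/2)) * (hMP0 A)
          + ((post θ lam d n 0 A - θ/2) * (post θ lam d n 1 A - θ/2)) * (hMP1 A)]
    simp only [Finset.sum_sub_distrib, ← Finset.mul_sum]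
  -- assemble
  have key : ∀ SA C1 T2 Uy Ux Uv B0 : ℝ,
      (1-θ)*T2 = (1-θ)*SA - C1 - C1 →
      θ/2*(Uy - θ/2) = SA →
      θ/2*(Ux - θ/2) = B0 →
      θ/2*Uv = C1 + θ/2*B0 →
      T2 = θ/2*(Uy - θ/2) - θ/(1-θ)*(Uv - θ/2*(Ux - θ/2)) := by
    intro SA C1 T2 Uy Ux Uv B0 h1 h2 h3 h4
    have e1 : T2 = SA - 2*C1/(1-θ) := by
      have h5 : T2 = ((1-θ)*SA - C1 - C1)/(1-θ) := by
        rw [← h1, mul_div_cancel_left₀ _ h1θ]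
      rw [h5]
      field_simp
      ring
    rw [e1, h2, h3]
    have e4 : Uv - B0 = 2*C1/θ := by
      have h6 : Uv = (C1 + θ/2*B0)/(θ/2) := by
        rw [← h4, mul_div_cancel_left₀ _ (by positivity)]
      rw [h6]
      field_simp
      ring
    rw [e4]
    field_simp
  have k6' := k6
  rw [symc] at k6'
  have hC := k9
  rw [← symb] at hC
  have hA : θ/2 * ((∑ A : Config d n, lik θ lam d n 0 A * post θ lam d n 1 A) - θ/2)
      = ∑ A : Config d n,
          marg θ lam d n A * ((post θ lam d n 0 A - θ/2) * (post θ lam d n 1 A - θ/2)) := by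
    linear_combination k7 + (θ/2) * k3 + (θ/2) * k2 - (θ/2)^2 * k1
  have hB : θ/2 * ((∑ A : Config d n, lik θ lam d n 0 A * post θ lam d n 0 A) - θ/2)
      = ∑ A : Config d n, marg θ lam d n A * (post θ lam d n 0 A - θ/2)^2 := by
    linear_combination k8 + 2*(θ/2) * k2 - (θ/2)^2 * k1
  simp only [condE, yT, vT, xT]
  exact key _ _ _ _ _ _ _ k6' hA hB hC

end Broadcast
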